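/- Let e ∈ {0, 1, …, N−1}. For every even shift τ = 2τ0 with 0 ≤ τ0 ≤ N−1, the periodic autocorrelation of the interleaved sequence S^e satisfies: R_{S^e}(2τ0) = 2N if τ0 = 0; R_{S^e}(2τ0) = 2N1 if τ0 = N/2; and R_{S^e}(2τ0) = 2N2 otherwise. -/

import Mathlib

open Finset



private lemma auxNTU_sum_double (f : ℕ → ℤ) (N : ℕ) :
    ∑ i ∈ range (2*N), f i = ∑ j ∈ range N, f (2*j) + ∑ j ∈ range N, f (2*j+1) := by
  induction N with
  | zero => simp
  | succ n ih =>
      have h : 2*(n+1) = (2*n+1)+1 := by ring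
      rw [h, Finset.sum_range_succ, Finset.sum_range_succ, Finset.sum_range_succ,
        Finset.sum_range_succ, ih]
      ring

private lemma auxNTU_periodic_add {α : Type*} (f : ℕ → α) (N : ℕ)
    (h : ∀ n, f (n+N) = f n) : ∀ k a, f (a + N * k) = f a := by
  intro k
  induction k with
  | zero => simp
  | succ n ih => intro a; rw [Nat.mul_succ, ← Nat.add_assoc, h, ih]

private lemma auxNTU_periodic_mod {α : Type*} (f : ℕ → α) (N : ℕ)
    (h : ∀ n, f (n+N) = f n) (a : ℕ) : f (a % N) = f a := by
  conv_rhs => rw [← Nat.mod_add_div a N]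
  exact (auxNTU_periodic_add f N h (a / N) (a % N)).symm

private lemma auxNTU_periodic_shift (f : ℕ → ℤ) (N : ℕ)
    (h : ∀ n, f (n+N) = f n) (e : ℕ) :
    ∑ j ∈ range N, f (j+e) = ∑ j ∈ range N, f j := by
  induction e with
  | zero => simp
  | succ e ih =>
      rw [← ih]
      rcases Nat.eq_zero_or_pos N with h0 | h0
      · simp [h0]
      · obtain ⟨n, rfl⟩ := Nat.exists_eq_add_of_lt h0
        rw [zero_add] at *
        have h1 := Finset.sum_range_succ' (fun j => f (j + e)) n
        have h2 := Finset.sum_range_succ (fun j => f (j + (e+1))) n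
        have h3 := Finset.sum_range_succ (fun j => f (j + e)) n
        have key : ∀ j, f (j + (e+1)) = f ((j+1) + e) := by
          intro j; congr 1; ring
        have h4 : f (n + 1 + e) = f (0 + e) := by
          calc f (n+1+e) = f (e + (n+1)) := by congr 1; ring
          _ = f e := h e
          _ = f (0 + e) := by congr 1; ring
        rw [h2]
        simp only [key]
        rw [h4, h1]

private lemma auxNTU_periodic_mul (f : ℕ → ℤ) (N k : ℕ)
    (h : ∀ n, f (n+N) = f n) :
    ∑ j ∈ range (N * k), f j = k * ∑ j ∈ range N, f j := by
  induction k with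
  | zero => simp
  | succ n ih =>
      rw [Nat.mul_succ]
      rw [Finset.sum_range_add, ih]
      have : ∀ i, f (N * n + i) = f i := by
        intro i
        rw [Nat.add_comm, auxNTU_periodic_add f N h n i]
      simp only [this]
      push_cast
      ring

private lemma auxNTU_neg_pow_add (a b : ZMod 2) :
    (-1:ℤ)^((a+b).val) = (-1)^a.val * (-1)^b.val := by revert a b; decide

private lemma auxNTU_emod_even (N a : ℤ) (hN : 0 < N) : (2*a) % (2*N) = 2*(a % N) :=
  Int.mul_emod_mul_of_pos _ _ (by norm_num)

private lemma auxNTU_emod_odd (N a : ℤ) (hN : 0 < N) : (2*a+1) % (2*N) = 2*(a % N) + 1 := by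
  have h1 : (2*a) % (2*N) = 2*(a % N) := Int.mul_emod_mul_of_pos _ _ (by norm_num)
  have h2 : a % N < N := Int.emod_lt_of_pos _ hN
  have h3 : 0 ≤ a % N := Int.emod_nonneg _ (by omega)
  have e1 : (1:ℤ) % (2*N) = 1 := Int.emod_eq_of_lt (by omega) (by omega)
  calc (2*a+1) % (2*N) = ((2*a) % (2*N) + 1 % (2*N)) % (2*N) := by rw [← Int.add_emod]
  _ = 2*(a%N) + 1 := by rw [h1, e1]; exact Int.emod_eq_of_lt (by omega) (by omega)

private lemma auxNTU_toNat_mod (x : ℤ) (h : 0 ≤ x) (N : ℕ) : (x % N).toNat = x.toNat % N := by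
  lift x to ℕ using h
  rw [Int.toNat_natCast]
  rcases Nat.eq_zero_or_pos N with h0 | h0
  · simp [h0]
  · have h1 : ((x % N : ℕ) : ℤ) = (x:ℤ) % (N:ℤ) := by norm_cast
    rw [← h1, Int.toNat_natCast]

private lemma auxNTU_fiber {V W : Type*} [AddCommGroup V] [AddCommGroup W]
    [Fintype V] [Fintype W] [DecidableEq V] [DecidableEq W]
    (ψ : V →+ W) (hs : Function.Surjective ψ) (y : W) :
    ((univ.filter (fun x => ψ x = y)).card) * Fintype.card W = Fintype.card V := by
  have hfib : ∀ y : W, (univ.filter (fun x => ψ x = y)).card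
      = (univ.filter (fun x => ψ x = 0)).card := by
    intro y
    obtain ⟨x0, hx0⟩ := hs y
    apply Finset.card_bij (fun x _ => x - x0)
    · intro a ha
      simp only [mem_filter, mem_univ, true_and] at ha ⊢
      rw [map_sub, ha, hx0, sub_self]
    · intro a ha b hb hab
      simpa using congrArg (· + x0) hab
    · intro b hb
      refine ⟨b + x0, ?_, by simp⟩
      simp only [mem_filter, mem_univ, true_and] at hb ⊢
      rw [map_add, hb, hx0, zero_add]
  have hcard : Fintype.card V = ∑ y : W, (univ.filter (fun x => ψ x = y)).card := by
    rw [← Finset.card_univ]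
    exact Finset.card_eq_sum_card_fiberwise (fun x _ => Finset.mem_univ (ψ x))
  rw [hfib y, hcard]
  rw [Finset.sum_congr rfl (fun y _ => hfib y), Finset.sum_const, Finset.card_univ,
    smul_eq_mul, Nat.mul_comm]


private lemma auxNTU_fiber' {V W : Type*} [AddCommGroup V] [AddCommGroup W]
    [Fintype V] [Fintype W] [DecidableEq V] [DecidableEq W]
    (ψ : V → W) (hadd : ∀ a b, ψ (a + b) = ψ a + ψ b) (hs : Function.Surjective ψ) (y : W) :
    ((univ.filter (fun x => ψ x = y)).card) * Fintype.card W = Fintype.card V := by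
  have h := auxNTU_fiber (AddMonoidHom.mk' ψ hadd) hs y
  simpa using h

private lemma auxNTU_sum_comp {V W : Type*} [Fintype V] [Fintype W] [DecidableEq W]
    (ψ : V → W) (g : W → ℤ) :
    ∑ x : V, g (ψ x) = ∑ y : W, ((univ.filter (fun x => ψ x = y)).card : ℤ) * g y := by
  rw [← Finset.sum_fiberwise_of_maps_to (fun x _ => Finset.mem_univ (ψ x)) (fun x => g (ψ x))]
  refine Finset.sum_congr rfl (fun y _ => ?_)
  rw [Finset.sum_congr rfl (fun x hx => ?_), Finset.sum_const, nsmul_eq_mul]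
  simp only [mem_filter] at hx
  rw [hx.2]

private lemma auxNTU_bridge (p : ℕ) [Fact p.Prime] (x : ZMod p) :
    legendreSym p ((x.val : ℤ)) = quadraticChar (ZMod p) x := by
  unfold legendreSym
  norm_cast
  rw [ZMod.natCast_val, ZMod.cast_id]


private lemma auxNTU_c0 (p : ℕ) [Fact p.Prime] (hp2 : p ≠ 2) (F : Type) [Field F] [Fintype F]
    [Algebra (ZMod p) F] (c : F) (hc : orderOf c = p - 1) :
    ∃ c0 : ZMod p, algebraMap (ZMod p) F c0 = c ∧ quadraticChar (ZMod p) c0 = -1 := by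
  have hp : p.Prime := Fact.out
  have hp3 : 3 ≤ p := hp.two_le.lt_of_ne (Ne.symm hp2)
  have hev : 2 * ((p-1)/2) = p - 1 := by
    have : Odd p := hp.odd_of_ne_two hp2
    obtain ⟨k, hk⟩ := this
    omega
  have h1 : c ^ (p-1) = 1 := hc ▸ pow_orderOf_eq_one c
  have hcne : c ≠ 0 := by
    intro h0
    rw [h0, zero_pow (by omega)] at h1
    exact zero_ne_one h1
  set cu : Fˣ := Units.mk0 c hcne with hcu_def
  have hcu : orderOf cu = p - 1 := by
    rw [← orderOf_units (y := cu)]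
    simpa [hcu_def] using hc
  set f : ZMod p →* F := (algebraMap (ZMod p) F : ZMod p →* F) with hf_def
  have hinj : Function.Injective (algebraMap (ZMod p) F) := (algebraMap (ZMod p) F).injective
  have huinj : Function.Injective (Units.map f) := Units.map_injective hinj
  classical
  set s : Finset Fˣ := univ.image (Units.map f) with hs_def
  have hscard : s.card = p - 1 := by
    rw [hs_def, Finset.card_image_of_injective _ huinj, Finset.card_univ, ZMod.card_units]
  set t : Finset Fˣ := univ.filter (fun x : Fˣ => x^(p-1) = 1) with ht_def
  have hst : s ⊆ t := by
    intro x hx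
    rw [hs_def, Finset.mem_image] at hx
    obtain ⟨u, _, rfl⟩ := hx
    rw [ht_def, Finset.mem_filter]
    refine ⟨Finset.mem_univ _, ?_⟩
    rw [← map_pow]
    have : u ^ (p-1) = 1 := by
      have := pow_card_eq_one (x := u)
      rwa [ZMod.card_units] at this
    rw [this, map_one]
  have hcut : cu ∈ t := by
    rw [ht_def, Finset.mem_filter]
    exact ⟨Finset.mem_univ _, hcu ▸ pow_orderOf_eq_one cu⟩
  have htcard : t.card ≤ p - 1 := by
    have := IsCyclic.card_pow_eq_one_le (α := Fˣ) (n := p - 1) (by omega)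
    simpa [ht_def, Finset.filter_congr_decidable] using this
  have hcus : cu ∈ s := by
    by_contra hno
    have hsub : insert cu s ⊆ t := Finset.insert_subset hcut hst
    have := Finset.card_le_card hsub
    rw [Finset.card_insert_of_notMem hno, hscard] at this
    omega
  rw [hs_def, Finset.mem_image] at hcus
  obtain ⟨u0, _, hu0⟩ := hcus
  have horder : orderOf u0 = p - 1 := by
    rw [← orderOf_injective (Units.map f) huinj u0, hu0, hcu]
  refine ⟨(u0 : ZMod p), ?_, ?_⟩
  · have : ((Units.map f u0 : Fˣ) : F) = c := by rw [hu0]; rfl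
    exact this
  · rw [quadraticChar_neg_one_iff_not_isSquare]
    rintro ⟨b, hb⟩
    have hbne : b ≠ 0 := by
      intro h0
      rw [h0, mul_zero] at hb
      exact (Units.ne_zero u0) hb
    have hbu : u0 = Units.mk0 b hbne * Units.mk0 b hbne := by
      ext
      simpa using hb
    have hpow : u0 ^ ((p-1)/2) = 1 := by
      rw [hbu, ← pow_two, ← pow_mul]
      have h2 : 2 * ((p-1)/2) = p - 1 := hev
      rw [h2]
      have := pow_card_eq_one (x := Units.mk0 b hbne)
      rwa [ZMod.card_units] at this
    have hdvd : orderOf u0 ∣ (p-1)/2 := orderOf_dvd_of_pow_eq_one hpow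
    rw [horder] at hdvd
    have := Nat.le_of_dvd (by omega) hdvd
    omega

private lemma auxNTU_span {p : ℕ} [Fact p.Prime] {F : Type} [Field F] [Fintype F]
    [Algebra (ZMod p) F] (h1 h2 : F →ₗ[ZMod p] ZMod p)
    (hle : LinearMap.ker h1 ≤ LinearMap.ker h2) : ∃ cc : ZMod p, h2 = cc • h1 := by
  have hsp := mem_span_of_iInf_ker_le_ker (ι := Unit) (L := fun _ => h1) (K := h2)
    (by simpa [iInf_const] using hle)
  rw [Set.range_const, Submodule.mem_span_singleton] at hsp
  obtain ⟨a, ha⟩ := hsp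
  exact ⟨a, ha.symm⟩

private lemma auxNTU_trace_nondeg (p : ℕ) [Fact p.Prime] (F : Type) [Field F] [Fintype F]
    [Algebra (ZMod p) F] (a : F) (h : ∀ x, Algebra.trace (ZMod p) F (a * x) = 0) : a = 0 := by
  haveI : FiniteDimensional (ZMod p) F := Module.finite_iff_finite.mpr inferInstance
  haveI : Algebra.IsAlgebraic (ZMod p) F := Algebra.IsAlgebraic.of_finite _ _
  have hnd := traceForm_nondegenerate (ZMod p) F
  exact hnd.1 a (fun y => by rw [Algebra.traceForm_apply]; exact h y)

private lemma auxNTU_trace_surj (p : ℕ) [Fact p.Prime] (F : Type) [Field F] [Fintype F]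
    [Algebra (ZMod p) F] : Function.Surjective (Algebra.trace (ZMod p) F) := by
  haveI : FiniteDimensional (ZMod p) F := Module.finite_iff_finite.mpr inferInstance
  haveI : Algebra.IsAlgebraic (ZMod p) F := Algebra.IsAlgebraic.of_finite _ _
  exact Algebra.trace_surjective (ZMod p) F

private lemma auxNTU_psi_surj (p : ℕ) [Fact p.Prime] (F : Type) [Field F] [Fintype F]
    [Algebra (ZMod p) F] (c' : F) (hc' : ∀ z : ZMod p, algebraMap (ZMod p) F z ≠ c') :
    Function.Surjective (fun x : F =>
      (Algebra.trace (ZMod p) F x, Algebra.trace (ZMod p) F (c' * x))) := by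
  set f : F →ₗ[ZMod p] ZMod p := Algebra.trace (ZMod p) F with hf_def
  set g : F →ₗ[ZMod p] ZMod p := f ∘ₗ LinearMap.mulLeft (ZMod p) c' with hg_def
  have hg_apply : ∀ x, g x = Algebra.trace (ZMod p) F (c' * x) := fun x => rfl
  have hsmul : ∀ (cc : ZMod p) (x : F), cc * Algebra.trace (ZMod p) F x
      = Algebra.trace (ZMod p) F (algebraMap (ZMod p) F cc * x) := by
    intro cc x
    rw [← Algebra.smul_def, map_smul, smul_eq_mul]
  have hker1 : ¬ LinearMap.ker g ≤ LinearMap.ker f := by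
    intro hle
    obtain ⟨cc, hcc⟩ := auxNTU_span g f hle
    have hcc0 : cc ≠ 0 := by
      intro h0
      rw [h0, zero_smul] at hcc
      obtain ⟨x, hx⟩ := auxNTU_trace_surj p F (1 : ZMod p)
      have hfx : f x = 0 := by rw [hcc]; simp
      have h10 : (1 : ZMod p) = 0 := by rw [← hx]; exact hfx
      exact one_ne_zero h10
    have key : ∀ x, Algebra.trace (ZMod p) F ((1 - algebraMap (ZMod p) F cc * c') * x) = 0 := by
      intro x
      have h1 : f x = cc * g x := by rw [hcc]; rfl
      rw [hg_apply, hsmul, ← mul_assoc] at h1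
      rw [sub_mul, one_mul, map_sub, ← h1, sub_self]
    have h2 := auxNTU_trace_nondeg p F _ key
    have h3 : algebraMap (ZMod p) F cc * c' = 1 := by
      have := sub_eq_zero.mp h2
      linear_combination -this
    have h4 : c' = algebraMap (ZMod p) F cc⁻¹ := by
      rw [map_inv₀]
      exact eq_inv_of_mul_eq_one_left (by rw [mul_comm]; exact h3)
    exact hc' cc⁻¹ h4.symm
  have hker2 : ¬ LinearMap.ker f ≤ LinearMap.ker g := by
    intro hle
    obtain ⟨cc, hcc⟩ := auxNTU_span f g hle
    have key : ∀ x, Algebra.trace (ZMod p) F ((c' - algebraMap (ZMod p) F cc) * x) = 0 := by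
      intro x
      have h1 : g x = cc * f x := by rw [hcc]; rfl
      rw [hg_apply, hf_def] at h1
      rw [hsmul] at h1
      rw [sub_mul, map_sub, ← h1, sub_self]
    have h2 := auxNTU_trace_nondeg p F _ key
    exact hc' cc (sub_eq_zero.mp h2).symm
  rw [SetLike.not_le_iff_exists] at hker1 hker2
  obtain ⟨x1, hx1g, hx1f⟩ := hker1
  obtain ⟨x2, hx2f, hx2g⟩ := hker2
  rw [LinearMap.mem_ker] at hx1g hx2f
  have hx1f' : f x1 ≠ 0 := fun h => hx1f (LinearMap.mem_ker.mpr h)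
  have hx2g' : g x2 ≠ 0 := fun h => hx2g (LinearMap.mem_ker.mpr h)
  rintro ⟨a, b⟩
  refine ⟨(a * (f x1)⁻¹) • x1 + (b * (g x2)⁻¹) • x2, ?_⟩
  have e1 : Algebra.trace (ZMod p) F ((a * (f x1)⁻¹) • x1 + (b * (g x2)⁻¹) • x2) = a := by
    rw [show Algebra.trace (ZMod p) F = (f : F →ₗ[ZMod p] ZMod p) from rfl]
    rw [map_add, map_smul, map_smul, hx2f, smul_eq_mul, smul_eq_mul, mul_zero, add_zero,
      mul_assoc, inv_mul_cancel₀ hx1f', mul_one]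
  have e2 : Algebra.trace (ZMod p) F (c' * ((a * (f x1)⁻¹) • x1 + (b * (g x2)⁻¹) • x2)) = b := by
    rw [show Algebra.trace (ZMod p) F (c' * ((a * (f x1)⁻¹) • x1 + (b * (g x2)⁻¹) • x2))
        = g ((a * (f x1)⁻¹) • x1 + (b * (g x2)⁻¹) • x2) from rfl]
    rw [map_add, map_smul, map_smul, hx1g, smul_eq_mul, smul_eq_mul, mul_zero, zero_add,
      mul_assoc, inv_mul_cancel₀ hx2g', mul_one]
  exact Prod.ext e1 e2

private lemma auxNTU_pow_sum (F : Type) [Field F] [Fintype F] [DecidableEq F] (ω : F) (Q : ℕ)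
    (hQ : orderOf ω = Q) (hQpos : 0 < Q) (hcard : Fintype.card F = Q + 1) (g : F → ℤ) :
    ∑ j ∈ range Q, g (ω ^ j) = ∑ x ∈ univ.erase (0:F), g x := by
  have h1 : ω ^ Q = 1 := hQ ▸ pow_orderOf_eq_one ω
  have hωne : ω ≠ 0 := by
    intro h0; rw [h0, zero_pow hQpos.ne'] at h1; exact zero_ne_one h1
  have key : ∀ i j : ℕ, i ≤ j → j - i < Q → ω ^ i = ω ^ j → i = j := by
    intro i j hij hlt heq
    have hj : j = i + (j - i) := by omega
    rw [hj, pow_add] at heq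
    have h2 : ω ^ (j - i) = 1 := by
      have := mul_left_cancel₀ (pow_ne_zero i hωne) (by rw [← heq, mul_one] :
        ω ^ i * 1 = ω ^ i * ω ^ (j - i))
      exact this.symm
    have h3 : Q ∣ j - i := hQ ▸ orderOf_dvd_of_pow_eq_one h2
    rcases Nat.eq_zero_or_pos (j - i) with h4 | h4
    · omega
    · have := Nat.le_of_dvd h4 h3; omega
  have hinj : ∀ i ∈ range Q, ∀ j ∈ range Q, ω ^ i = ω ^ j → i = j := by
    intro i hi j hj hij
    rw [mem_range] at hi hj
    rcases le_total i j with h | h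
    · exact key i j h (by omega) hij
    · exact (key j i h (by omega) hij.symm).symm
  have himage : (range Q).image (ω ^ ·) = univ.erase (0:F) := by
    apply Finset.eq_of_subset_of_card_le
    · intro x hx
      rw [Finset.mem_image] at hx
      obtain ⟨j, _, rfl⟩ := hx
      rw [Finset.mem_erase]
      exact ⟨pow_ne_zero _ hωne, mem_univ _⟩
    · rw [Finset.card_erase_of_mem (mem_univ 0), Finset.card_univ, hcard,
        Finset.card_image_of_injOn (fun i hi j hj h => hinj i hi j hj h), card_range]
      omega
  rw [← himage, Finset.sum_image hinj]

/-- The geometric sequence of the first type: `t¹ₙ = 1` iff the Legendre symbol of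
`Tr(ω^n)` is `-1`, and `0` otherwise (i.e. when the symbol is `0` or `1`). -/
noncomputable def ntuT1 (p : ℕ) [Fact p.Prime] {F : Type} [Field F]
    [Algebra (ZMod p) F] (ω : F) (n : ℕ) : ZMod 2 :=
  if legendreSym p ((Algebra.trace (ZMod p) F (ω ^ n)).val : ℤ) = -1 then 1 else 0

/-- The geometric sequence of the second type: `t²ₙ = 0` iff the Legendre symbol of
`Tr(ω^n)` is `1`, and `1` otherwise (i.e. when the symbol is `0` or `-1`). -/
noncomputable def ntuT2 (p : ℕ) [Fact p.Prime] {F : Type} [Field F]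
    [Algebra (ZMod p) F] (ω : F) (n : ℕ) : ZMod 2 :=
  if legendreSym p ((Algebra.trace (ZMod p) F (ω ^ n)).val : ℤ) = 1 then 0 else 1

/-- Periodic cross-correlation at shift `τ` of two `N`-periodic binary sequences:
`R_{s,s'}(τ) = Σ_{i=0}^{N-1} (-1)^{s_i + s'_{i+τ}}`, indices taken modulo `N`. -/
def pcorr (N : ℕ) (s s' : ℕ → ZMod 2) (τ : ℤ) : ℤ :=
  ∑ i ∈ Finset.range N, (-1 : ℤ) ^ ((s i + s' ((((i : ℤ) + τ) % (N : ℤ)).toNat)).val)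

/-- The interleaved sequence of `t` and the left shift by `e` of `u`:
`n = 2j ↦ t j`, `n = 2j+1 ↦ u (j + e)`. -/
def ntuInterleave (t u : ℕ → ZMod 2) (e : ℕ) (n : ℕ) : ZMod 2 :=
  if n % 2 = 0 then t (n / 2) else u (n / 2 + e)

theorem stmt6 (p m : ℕ) [Fact p.Prime] (hp2 : p ≠ 2) (hm : 1 < m)
    (F : Type) [Field F] [Fintype F] [Algebra (ZMod p) F]
    (hcard : Fintype.card F = p ^ m) (ω : F) (hω : orderOf ω = p ^ m - 1)
    (N : ℕ) (hN : N = 2 * (p ^ m - 1) / (p - 1)) (N1 N2 : ℤ)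
    (hN1 : N1 = -2 * (p : ℤ) ^ (m - 1) + 2 * ((p : ℤ) ^ (m - 1) - 1) / ((p : ℤ) - 1))
    (hN2 : N2 = 2 * ((p : ℤ) ^ (m - 2) - 1) / ((p : ℤ) - 1))
    (e : ℕ) (he : e < N) (τ0 : ℤ) (hτ0 : 0 ≤ τ0) (hτ1 : τ0 ≤ (N : ℤ) - 1) :
    pcorr (2 * N) (ntuInterleave (ntuT1 p ω) (ntuT2 p ω) e) (ntuInterleave (ntuT1 p ω) (ntuT2 p ω) e) (2 * τ0) =
      if τ0 = 0 then 2 * (N : ℤ)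
      else if τ0 = ((N / 2 : ℕ) : ℤ) then 2 * N1
      else 2 * N2 := by
  classical
  have hp : p.Prime := Fact.out
  have hp3 : 3 ≤ p := by
    have := hp.two_le
    omega
  have hq1 : 2 ≤ p ^ m := by
    calc 2 ≤ p := by omega
    _ = p ^ 1 := (pow_one p).symm
    _ ≤ p ^ m := Nat.pow_le_pow_right (by omega) (by omega)
  have hdvd : (p - 1) ∣ (p ^ m - 1) := by
    have := Nat.sub_dvd_pow_sub_pow p 1 m
    simpa using this
  obtain ⟨n0, hn0⟩ := hdvd
  have hn0pos : 0 < n0 := by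
    rcases Nat.eq_zero_or_pos n0 with rfl | h
    · rw [Nat.mul_zero] at hn0; omega
    · exact h
  have hNn0 : N = 2 * n0 := by
    rw [hN, hn0, show 2*((p-1)*n0) = (p-1)*(2*n0) by ring,
      Nat.mul_div_cancel_left _ (by omega : 0 < p - 1)]
  have hNpos : 0 < N := by omega
  set τ : ℕ := τ0.toNat with hτ_def
  have hττ0 : (τ : ℤ) = τ0 := Int.toNat_of_nonneg hτ0
  have hτN : τ < N := by omega
  -- basic objects
  set T : F → ZMod p := fun x => Algebra.trace (ZMod p) F x with hT_def
  set χ : ZMod p → ℤ := fun z => quadraticChar (ZMod p) z with hχ_def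
  set L : ℕ → ℤ := fun n => χ (T (ω ^ n)) with hL_def
  set d : ℕ → ℤ := fun n => if T (ω ^ n) = 0 then 1 else 0 with hd_def
  have hbr1 : ∀ n, ntuT1 p ω n = if L n = -1 then 1 else 0 := by
    intro n
    rw [ntuT1, auxNTU_bridge p]
  have hbr2 : ∀ n, ntuT2 p ω n = if L n = 1 then 0 else 1 := by
    intro n
    rw [ntuT2, auxNTU_bridge p]
  have hχ0 : χ 0 = 0 := by rw [hχ_def]; exact quadraticChar_zero
  have hLd : ∀ n, T (ω ^ n) ≠ 0 → L n = 1 ∨ L n = -1 := by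
    intro n hn
    exact quadraticChar_dichotomy hn
  have hg1 : ∀ n, ((-1:ℤ)) ^ ((ntuT1 p ω n).val) = L n + d n := by
    intro n
    rw [hbr1]
    by_cases h0 : T (ω ^ n) = 0
    · have : L n = 0 := by rw [hL_def]; simp only [h0]; exact hχ0
      rw [this]
      simp [hd_def, h0, ZMod.val_one]
    · have hd0 : d n = 0 := by simp [hd_def, h0]
      rcases hLd n h0 with h1 | h1 <;> rw [h1] <;> simp [hd0, ZMod.val_one]
  have hg2 : ∀ n, ((-1:ℤ)) ^ ((ntuT2 p ω n).val) = L n - d n := by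
    intro n
    rw [hbr2]
    by_cases h0 : T (ω ^ n) = 0
    · have : L n = 0 := by rw [hL_def]; simp only [h0]; exact hχ0
      rw [this]
      simp [hd_def, h0, ZMod.val_one]
    · have hd0 : d n = 0 := by simp [hd_def, h0]
      rcases hLd n h0 with h1 | h1 <;> rw [h1] <;> simp [hd0, ZMod.val_one]
  -- the multiplier c0
  have hω1 : ω ^ (p ^ m - 1) = 1 := hω ▸ pow_orderOf_eq_one ω
  have hωne : ω ≠ 0 := by
    intro h0
    rw [h0, zero_pow (by omega : p ^ m - 1 ≠ 0)] at hω1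
    exact zero_ne_one hω1
  have hn0dvd : n0 ∣ p ^ m - 1 := ⟨p - 1, by rw [hn0]; ring⟩
  have hordc : orderOf (ω ^ n0) = p - 1 := by
    rw [orderOf_pow' ω hn0pos.ne', hω, Nat.gcd_eq_right hn0dvd, hn0, Nat.mul_div_cancel _ hn0pos]
  obtain ⟨c0, hc0, hχc0⟩ := auxNTU_c0 p hp2 F (ω ^ n0) hordc
  have hc0ne : c0 ≠ 0 := by
    intro h0
    rw [h0] at hχc0
    rw [show quadraticChar (ZMod p) 0 = χ 0 from rfl, hχ0] at hχc0
    norm_num at hχc0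
  have hTn0 : ∀ n, T (ω ^ (n + n0)) = c0 * T (ω ^ n) := by
    intro n
    rw [hT_def]
    simp only
    rw [pow_add, mul_comm (ω ^ n) (ω ^ n0), ← hc0, ← Algebra.smul_def, map_smul, smul_eq_mul]
  have hLn0 : ∀ n, L (n + n0) = - L n := by
    intro n
    rw [hL_def]
    simp only
    rw [hTn0, hχ_def]
    simp only
    rw [map_mul]
    rw [show quadraticChar (ZMod p) c0 = -1 from hχc0]
    ring
  have hdn0 : ∀ n, d (n + n0) = d n := by
    intro n
    rw [hd_def]
    simp only
    rw [hTn0]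
    simp [mul_eq_zero, hc0ne]
  have hLN : ∀ n, L (n + N) = L n := by
    intro n
    rw [hNn0, show n + 2 * n0 = (n + n0) + n0 by ring, hLn0, hLn0, neg_neg]
  have hdN : ∀ n, d (n + N) = d n := by
    intro n
    rw [hNn0, show n + 2 * n0 = (n + n0) + n0 by ring, hdn0, hdn0]
  have ht1N : ∀ n, ntuT1 p ω (n + N) = ntuT1 p ω n := by
    intro n
    rw [hbr1, hbr1, hLN]
  have ht2N : ∀ n, ntuT2 p ω (n + N) = ntuT2 p ω n := by
    intro n
    rw [hbr2, hbr2, hLN]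
  -- reduction of the correlation
  have hmain : pcorr (2 * N) (ntuInterleave (ntuT1 p ω) (ntuT2 p ω) e)
      (ntuInterleave (ntuT1 p ω) (ntuT2 p ω) e) (2 * τ0)
      = ∑ j ∈ range N, (2 * (L j * L (j + τ)) + 2 * (d j * d (j + τ))) := by
    set s : ℕ → ZMod 2 := ntuInterleave (ntuT1 p ω) (ntuT2 p ω) e with hs_def
    have hs_even : ∀ k, s (2*k) = ntuT1 p ω k := by
      intro k
      rw [hs_def, ntuInterleave]
      simp [Nat.mul_mod_right, Nat.mul_div_cancel_left]
    have hs_odd : ∀ k, s (2*k+1) = ntuT2 p ω (k + e) := by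
      intro k
      rw [hs_def, ntuInterleave]
      have h1 : (2*k+1) % 2 = 1 := by omega
      have h2 : (2*k+1) / 2 = k := by omega
      rw [h1, h2]
      norm_num
    have hN0 : (0:ℤ) < (N:ℤ) := by exact_mod_cast hNpos
    have hidx_even : ∀ j : ℕ,
        ((((2*j : ℕ) : ℤ) + 2*τ0) % (((2*N : ℕ)) : ℤ)).toNat = 2 * ((j + τ) % N) := by
      intro j
      have h1 : (((2*j:ℕ):ℤ) + 2*τ0) = 2*((j:ℤ) + τ0) := by push_cast; ring
      have h2 : (((2*N:ℕ)) : ℤ) = 2*(N:ℤ) := by push_cast; ring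
      rw [h1, h2, auxNTU_emod_even _ _ hN0]
      have h3 : (j:ℤ) + τ0 = ((j + τ : ℕ) : ℤ) := by push_cast; omega
      rw [h3]
      have h4 : (0:ℤ) ≤ ((j+τ:ℕ):ℤ) % (N:ℤ) := Int.emod_nonneg _ (by omega)
      have h5 := auxNTU_toNat_mod ((j+τ:ℕ):ℤ) (by positivity) N
      omega
    have hidx_odd : ∀ j : ℕ,
        ((((2*j+1 : ℕ) : ℤ) + 2*τ0) % (((2*N : ℕ)) : ℤ)).toNat = 2 * ((j + τ) % N) + 1 := by
      intro j
      have h1 : (((2*j+1:ℕ):ℤ) + 2*τ0) = 2*((j:ℤ) + τ0) + 1 := by push_cast; ring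
      have h2 : (((2*N:ℕ)) : ℤ) = 2*(N:ℤ) := by push_cast; ring
      rw [h1, h2, auxNTU_emod_odd _ _ hN0]
      have h3 : (j:ℤ) + τ0 = ((j + τ : ℕ) : ℤ) := by push_cast; omega
      rw [h3]
      have h4 : (0:ℤ) ≤ ((j+τ:ℕ):ℤ) % (N:ℤ) := Int.emod_nonneg _ (by omega)
      have h5 := auxNTU_toNat_mod ((j+τ:ℕ):ℤ) (by positivity) N
      omega
    rw [pcorr, auxNTU_sum_double (fun i =>
      (-1 : ℤ) ^ ((s i + s ((((i : ℤ) + 2*τ0) % (((2*N : ℕ)) : ℤ)).toNat)).val)) N]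
    have hES : ∑ j ∈ range N,
        (-1 : ℤ) ^ ((s (2*j) + s (((((2*j:ℕ) : ℤ) + 2*τ0) % (((2*N : ℕ)) : ℤ)).toNat)).val)
        = ∑ j ∈ range N, (L j + d j) * (L (j+τ) + d (j+τ)) := by
      refine Finset.sum_congr rfl (fun j _ => ?_)
      rw [hidx_even j, hs_even j, hs_even ((j+τ) % N), auxNTU_neg_pow_add, hg1, hg1,
        auxNTU_periodic_mod L N hLN (j+τ), auxNTU_periodic_mod d N hdN (j+τ)]
    have hOS : ∑ j ∈ range N,
        (-1 : ℤ) ^ ((s (2*j+1) + s (((((2*j+1:ℕ) : ℤ) + 2*τ0) % (((2*N : ℕ)) : ℤ)).toNat)).val)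
        = ∑ j ∈ range N, (L j - d j) * (L (j+τ) - d (j+τ)) := by
      set D : ℕ → ℤ :=
        fun n => (-1:ℤ)^((ntuT2 p ω (n % N) + ntuT2 p ω ((n + τ) % N)).val) with hD_def
      have hDper : ∀ n, D (n + N) = D n := by
        intro n
        rw [hD_def]
        simp only
        rw [Nat.add_mod_right, show n + N + τ = (n + τ) + N by ring, Nat.add_mod_right]
      have hOS1 : ∑ j ∈ range N,
          (-1 : ℤ) ^ ((s (2*j+1) + s (((((2*j+1:ℕ) : ℤ) + 2*τ0) % (((2*N : ℕ)) : ℤ)).toNat)).val)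
          = ∑ j ∈ range N, D (j + e) := by
        refine Finset.sum_congr rfl (fun j _ => ?_)
        rw [hidx_odd j, hs_odd j, hs_odd ((j+τ) % N), hD_def]
        simp only
        have e1 : ntuT2 p ω (j+e) = ntuT2 p ω ((j+e) % N) :=
          (auxNTU_periodic_mod (ntuT2 p ω) N ht2N (j+e)).symm
        have e2 : ntuT2 p ω (((j+τ) % N) + e) = ntuT2 p ω ((j+e+τ) % N) := by
          rw [← auxNTU_periodic_mod (ntuT2 p ω) N ht2N (((j+τ) % N) + e)]
          congr 1
          rw [Nat.mod_add_mod, show j + τ + e = j + e + τ by ring]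
        rw [e1, e2]
      rw [hOS1, auxNTU_periodic_shift D N hDper e]
      refine Finset.sum_congr rfl (fun j hj => ?_)
      rw [hD_def]
      simp only
      rw [Nat.mod_eq_of_lt (mem_range.mp hj), auxNTU_neg_pow_add, hg2, hg2,
        auxNTU_periodic_mod L N hLN (j+τ), auxNTU_periodic_mod d N hdN (j+τ)]
    rw [hES, hOS, ← Finset.sum_add_distrib]
    exact Finset.sum_congr rfl (fun j _ => by ring)
  rw [hmain]
  -- shared facts
  have hpdZ : ((p:ℤ) - 1) ≠ 0 := by
    have : (3:ℤ) ≤ (p:ℤ) := by exact_mod_cast hp3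
    omega
  have hNn0' : N = n0 * 2 := by omega
  have hq' : n0 * (p-1) = p^m - 1 := by rw [hn0]; ring
  have hsq : ∀ j, L j * L j = 1 - d j := by
    intro j
    by_cases h0 : T (ω ^ j) = 0
    · have hLz : L j = 0 := by rw [hL_def]; simp only; rw [h0]; exact hχ0
      rw [hLz]
      simp [hd_def, h0]
    · have hd0 : d j = 0 := by simp [hd_def, h0]
      rcases hLd j h0 with h1 | h1 <;> rw [h1, hd0] <;> ring
  have hdd : ∀ j, d j * d j = d j := by
    intro j
    rw [hd_def]
    simp only
    split_ifs <;> ring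
  have hcastQ : Fintype.card F = (p^m - 1) + 1 := by omega
  by_cases hτz : τ = 0
  · -- trivial shift
    have hτ00 : τ0 = 0 := by omega
    rw [if_pos hτ00]
    have hper : ∀ j ∈ range N, 2*(L j * L (j + τ)) + 2*(d j * d (j + τ)) = 2 := by
      intro j _
      rw [hτz, Nat.add_zero]
      linear_combination 2 * hsq j + 2 * hdd j
    rw [Finset.sum_congr rfl hper, Finset.sum_const, Finset.card_range, nsmul_eq_mul]
    ring
  have hτ0ne : τ0 ≠ 0 := fun h => hτz (by omega)
  rw [if_neg hτ0ne]
  have hhalf : ((N/2 : ℕ) : ℤ) = (n0:ℤ) := by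
    rw [hNn0, Nat.mul_div_cancel_left n0 (by norm_num : 0 < 2)]
  -- trace-zero counting (used in the τ = n0 case)
  have hadT : ∀ a b : F, T (a+b) = T a + T b := fun a b => map_add (Algebra.trace (ZMod p) F) a b
  have hTsurj : Function.Surjective T := auxNTU_trace_surj p F
  have hc1 : ((p - 1 : ℕ) : ℤ) = (p:ℤ) - 1 := by
    push_cast [Nat.cast_sub (by omega : 1 ≤ p)]
    ring
  by_cases hτn0 : τ = n0
  · -- half-period shift
    have hcond : τ0 = ((N/2 : ℕ) : ℤ) := by rw [hhalf]; omega
    rw [if_pos hcond]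
    have htfc : (univ.filter (fun x : F => T x = 0)).card = p ^ (m-1) := by
      have h1 := auxNTU_fiber' T hadT hTsurj 0
      rw [ZMod.card, hcard] at h1
      have h2 : p^m = p^(m-1) * p := by
        conv_lhs => rw [show m = (m-1)+1 by omega]
        rw [pow_succ]
      rw [h2] at h1
      exact Nat.eq_of_mul_eq_mul_right (by omega) h1
    have hSdkey : ((p:ℤ) - 1) * (∑ j ∈ range n0, d j) = (p:ℤ)^(m-1) - 1 := by
      have h1 := auxNTU_periodic_mul d n0 (p-1) hdn0
      rw [hq'] at h1
      have h3 := auxNTU_pow_sum F ω (p^m - 1) hω (by omega) hcastQ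
        (fun x => if T x = 0 then (1:ℤ) else 0)
      have h3' : ∑ j ∈ range (p^m - 1), d j
          = ∑ x ∈ univ.erase (0:F), (if T x = 0 then (1:ℤ) else 0) := by
        rw [← h3]
      have h4 := Finset.add_sum_erase (univ : Finset F)
        (fun x => if T x = 0 then (1:ℤ) else 0) (mem_univ 0)
      have hT0 : T (0:F) = 0 := map_zero (Algebra.trace (ZMod p) F)
      simp only [hT0, if_pos] at h4
      have h5 : ∑ x ∈ (univ : Finset F), (if T x = 0 then (1:ℤ) else 0)
          = ((univ.filter (fun x : F => T x = 0)).card : ℤ) := by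
        rw [Finset.sum_boole]
      rw [h3', hc1] at h1
      rw [h5, htfc] at h4
      have hc2 : ((p^(m-1) : ℕ) : ℤ) = (p:ℤ)^(m-1) := by push_cast; ring
      rw [hc2] at h4
      linarith [h1, h4]
    have hper : ∀ j ∈ range N, 2*(L j * L (j + τ)) + 2*(d j * d (j + τ)) = 4 * d j - 2 := by
      intro j _
      rw [hτn0, hLn0 j, hdn0 j]
      linear_combination (-2) * hsq j + 2 * hdd j
    rw [Finset.sum_congr rfl hper]
    have hsum1 : ∑ j ∈ range N, (4 * d j - 2) = 4 * (∑ j ∈ range N, d j) - 2*(N:ℤ) := by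
      rw [Finset.sum_sub_distrib, ← Finset.mul_sum, Finset.sum_const, Finset.card_range,
        nsmul_eq_mul]
      ring
    have hsum2 : ∑ j ∈ range N, d j = 2 * ∑ j ∈ range n0, d j := by
      have h := auxNTU_periodic_mul d n0 2 hdn0
      rw [← hNn0'] at h
      rw [h]
      push_cast
      ring
    have hN1' : N1 = -2*(p:ℤ)^(m-1) + 2*(∑ j ∈ range n0, d j) := by
      rw [hN1]
      congr 1
      have h : 2 * ((p:ℤ)^(m-1) - 1) = ((p:ℤ)-1) * (2*(∑ j ∈ range n0, d j)) := by
        linarith [hSdkey]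
      rw [h, Int.mul_ediv_cancel_left _ hpdZ]
    have hcastn0 : ((p:ℤ)-1) * (n0:ℤ) = (p:ℤ)^m - 1 := by
      have h : ((p^m - 1 : ℕ) : ℤ) = (((p-1)*n0 : ℕ) : ℤ) := by exact_mod_cast congrArg Nat.cast hn0
      push_cast [Nat.cast_sub (by omega : 1 ≤ p^m), Nat.cast_sub (by omega : 1 ≤ p)] at h
      linarith [h]
    have hpm : (p:ℤ)^m = (p:ℤ)*(p:ℤ)^(m-1) := by
      conv_lhs => rw [show m = (m-1)+1 by omega]
      rw [pow_succ]
      ring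
    have hNZ : (N:ℤ) = 2*(n0:ℤ) := by exact_mod_cast congrArg Nat.cast hNn0
    have hkey : (∑ j ∈ range n0, d j) + (p:ℤ)^(m-1) = (n0:ℤ) := by
      apply mul_left_cancel₀ hpdZ
      linear_combination hSdkey - hcastn0 - hpm
    rw [hsum1, hsum2, hN1']
    linarith [hkey, hNZ]
  · -- generic shift
    have hcond : τ0 ≠ ((N/2 : ℕ) : ℤ) := by
      rw [hhalf]
      intro h
      exact hτn0 (by omega)
    rw [if_neg hcond]
    have hτpos : 0 < τ := Nat.pos_of_ne_zero hτz
    have hc'ne : ∀ z : ZMod p, algebraMap (ZMod p) F z ≠ ω ^ τ := by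
      intro z hz
      have hωτ : ω ^ τ ≠ 0 := pow_ne_zero _ hωne
      have hzne : z ≠ 0 := by
        intro h0
        rw [h0, map_zero] at hz
        exact hωτ hz.symm
      have hz1 : (ω ^ τ) ^ (p-1) = 1 := by
        rw [← hz, ← map_pow, ZMod.pow_card_sub_one_eq_one hzne, map_one]
      have hdvd2 : (p^m - 1) ∣ τ * (p-1) := by
        rw [← hω]
        apply orderOf_dvd_of_pow_eq_one
        rw [pow_mul]
        exact hz1
      obtain ⟨k, hk⟩ := hdvd2
      have hub : τ * (p-1) < 2 * (p^m - 1) := by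
        calc τ * (p-1) < (2*n0) * (p-1) :=
              (Nat.mul_lt_mul_right (show 0 < p - 1 by omega)).mpr (show τ < 2*n0 by omega)
        _ = 2 * (n0 * (p-1)) := by ring
        _ = 2 * (p^m - 1) := by rw [hq']
      have hlb : 0 < τ * (p-1) := Nat.mul_pos hτpos (by omega)
      have hk1 : k = 1 := by
        rcases k with _ | k
        · rw [Nat.mul_zero] at hk
          omega
        · rcases k with _ | k
          · rfl
          · exfalso
            have h2 : (p^m - 1) * 2 ≤ (p^m - 1) * (k+1+1) := Nat.mul_le_mul_left _ (by omega)
            omega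
      rw [hk1, Nat.mul_one] at hk
      rw [hn0] at hk
      have : τ = n0 :=
        Nat.eq_of_mul_eq_mul_right (show 0 < p-1 by omega)
          (hk.trans (by ring : (p-1)*n0 = n0*(p-1)))
      exact hτn0 this
    set ψ : F → ZMod p × ZMod p := fun x => (T x, T (ω^τ * x)) with hψ_def
    have hψadd : ∀ a b : F, ψ (a+b) = ψ a + ψ b := by
      intro a b
      rw [hψ_def]
      simp only
      rw [mul_add, hadT, hadT]
      rfl
    have hψsurj : Function.Surjective ψ := auxNTU_psi_surj p F (ω^τ) hc'ne
    have hkc : ∀ y, ((univ.filter (fun x : F => ψ x = y)).card) = p^(m-2) := by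
      intro y
      have h1 := auxNTU_fiber' ψ hψadd hψsurj y
      rw [Fintype.card_prod, ZMod.card, hcard] at h1
      have h2 : p^m = p^(m-2) * (p*p) := by
        conv_lhs => rw [show m = (m-2)+1+1 by omega]
        rw [pow_succ, pow_succ]
        ring
      rw [h2] at h1
      exact Nat.eq_of_mul_eq_mul_right (Nat.mul_pos (by omega) (by omega)) h1
    have hχsum : ∑ a : ZMod p, χ a = 0 := by
      rw [hχ_def]
      exact quadraticChar_sum_zero (by rw [ZMod.ringChar_zmod_n]; exact hp2)
    have haper : ∀ n, (fun j => L j * L (j + τ)) (n + n0) = (fun j => L j * L (j + τ)) n := by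
      intro n
      simp only
      rw [show (n+n0)+τ = (n+τ)+n0 by ring, hLn0, hLn0]
      ring
    have hbper : ∀ n, (fun j => d j * d (j + τ)) (n + n0) = (fun j => d j * d (j + τ)) n := by
      intro n
      simp only
      rw [show (n+n0)+τ = (n+τ)+n0 by ring, hdn0, hdn0]
    have hSL0 : ∑ j ∈ range n0, L j * L (j+τ) = 0 := by
      have h1 := auxNTU_periodic_mul (fun j => L j * L (j + τ)) n0 (p-1) haper
      rw [hq'] at h1
      have h3 := auxNTU_pow_sum F ω (p^m-1) hω (by omega) hcastQ
        (fun x => χ (T x) * χ (T (ω^τ * x)))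
      have h3' : ∑ j ∈ range (p^m-1), L j * L (j+τ)
          = ∑ x ∈ univ.erase (0:F), (χ (T x) * χ (T (ω^τ * x))) := by
        rw [← h3]
        refine Finset.sum_congr rfl (fun j _ => ?_)
        rw [hL_def]
        simp only
        rw [show ω ^ (j+τ) = ω^τ * ω^j from by rw [pow_add]; ring]
      have h4 : ∑ x ∈ (univ : Finset F), (χ (T x) * χ (T (ω^τ * x))) = 0 := by
        have hcomp := auxNTU_sum_comp ψ (fun y => χ y.1 * χ y.2)
        have hl : ∑ x : F, (fun y : ZMod p × ZMod p => χ y.1 * χ y.2) (ψ x)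
            = ∑ x ∈ (univ : Finset F), (χ (T x) * χ (T (ω^τ * x))) := rfl
        rw [hl] at hcomp
        rw [hcomp]
        have hstep : ∀ y : ZMod p × ZMod p,
            (((univ.filter (fun x : F => ψ x = y)).card : ℤ)) * (χ y.1 * χ y.2)
            = ((p^(m-2) : ℕ) : ℤ) * (χ y.1 * χ y.2) := by
          intro y
          rw [hkc y]
        rw [Finset.sum_congr rfl (fun y _ => hstep y), ← Finset.mul_sum]
        have hprod : ∑ y : ZMod p × ZMod p, χ y.1 * χ y.2
            = (∑ a : ZMod p, χ a) * (∑ b : ZMod p, χ b) := by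
          rw [Finset.sum_mul_sum, Fintype.sum_prod_type]
        rw [hprod, hχsum]
        ring
      have h5 : χ (T (0:F)) * χ (T (ω^τ * (0:F))) = 0 := by
        rw [show T (0:F) = 0 from map_zero (Algebra.trace (ZMod p) F), hχ0]
        ring
      have h6 := Finset.add_sum_erase (univ : Finset F)
        (fun x => χ (T x) * χ (T (ω^τ * x))) (mem_univ 0)
      rw [h3', hc1] at h1
      have hz : ((p:ℤ)-1) * (∑ j ∈ range n0, L j * L (j+τ)) = 0 := by
        rw [← h1]
        linarith [h4, h5, h6]
      rcases mul_eq_zero.mp hz with h | h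
      · exact absurd h hpdZ
      · exact h
    have hSdd : ((p:ℤ)-1) * (∑ j ∈ range n0, d j * d (j+τ)) = (p:ℤ)^(m-2) - 1 := by
      have h1 := auxNTU_periodic_mul (fun j => d j * d (j + τ)) n0 (p-1) hbper
      rw [hq'] at h1
      have h3 := auxNTU_pow_sum F ω (p^m-1) hω (by omega) hcastQ
        (fun x => (if T x = 0 then (1:ℤ) else 0) * (if T (ω^τ * x) = 0 then (1:ℤ) else 0))
      have h3' : ∑ j ∈ range (p^m-1), d j * d (j+τ)
          = ∑ x ∈ univ.erase (0:F),
            ((if T x = 0 then (1:ℤ) else 0) * (if T (ω^τ * x) = 0 then (1:ℤ) else 0)) := by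
        rw [← h3]
        refine Finset.sum_congr rfl (fun j _ => ?_)
        rw [hd_def]
        simp only
        rw [show ω ^ (j+τ) = ω^τ * ω^j from by rw [pow_add]; ring]
      have h4 : ∑ x ∈ (univ : Finset F),
          ((if T x = 0 then (1:ℤ) else 0) * (if T (ω^τ * x) = 0 then (1:ℤ) else 0))
          = ((p^(m-2) : ℕ) : ℤ) := by
        have hconv : ∀ x : F,
            (if T x = 0 then (1:ℤ) else 0) * (if T (ω^τ * x) = 0 then (1:ℤ) else 0)
            = if ψ x = ((0:ZMod p), (0:ZMod p)) then (1:ℤ) else 0 := by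
          intro x
          rw [hψ_def]
          by_cases h1 : T x = 0 <;> by_cases h2 : T (ω^τ * x) = 0 <;>
            simp [h1, h2, Prod.ext_iff]
        rw [Finset.sum_congr rfl (fun x _ => hconv x), Finset.sum_boole, hkc]
      have h6 := Finset.add_sum_erase (univ : Finset F)
        (fun x => (if T x = 0 then (1:ℤ) else 0) * (if T (ω^τ * x) = 0 then (1:ℤ) else 0))
        (mem_univ 0)
      have h5 : (if T (0:F) = 0 then (1:ℤ) else 0) * (if T (ω^τ * (0:F)) = 0 then (1:ℤ) else 0)
          = 1 := by
        simp [mul_zero, show T (0:F) = 0 from map_zero (Algebra.trace (ZMod p) F)]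
      rw [h3', hc1] at h1
      have hc2 : ((p^(m-2) : ℕ) : ℤ) = (p:ℤ)^(m-2) := by push_cast; ring
      linarith [h1, h4, h5, h6, hc2.le, hc2.ge]
    have hsplit : ∑ j ∈ range N, (2*(L j * L (j+τ)) + 2*(d j * d (j+τ)))
        = 2 * (∑ j ∈ range N, L j * L (j+τ)) + 2 * (∑ j ∈ range N, d j * d (j+τ)) := by
      rw [Finset.sum_add_distrib, ← Finset.mul_sum, ← Finset.mul_sum]
    have hA : ∑ j ∈ range N, L j * L (j+τ) = 0 := by
      have h := auxNTU_periodic_mul (fun j => L j * L (j + τ)) n0 2 haper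
      rw [← hNn0'] at h
      rw [h, hSL0]
      ring
    have hB : ∑ j ∈ range N, d j * d (j+τ) = 2 * ∑ j ∈ range n0, d j * d (j+τ) := by
      have h := auxNTU_periodic_mul (fun j => d j * d (j + τ)) n0 2 hbper
      rw [← hNn0'] at h
      rw [h]
      push_cast
      ring
    have hN2' : N2 = 2 * ∑ j ∈ range n0, d j * d (j+τ) := by
      rw [hN2]
      have h : 2 * ((p:ℤ)^(m-2) - 1) = ((p:ℤ)-1) * (2 * ∑ j ∈ range n0, d j * d (j+τ)) := by
        linarith [hSdd]
      rw [h, Int.mul_ediv_cancel_left _ hpdZ]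
    rw [hsplit, hA, hB, hN2']
    ring
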